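/- In the quotient ring R = (Z/2)[x,y,z]/I where I is generated by (x^2*y^2 + y^2*z^2, y^4 + y^2*z^2, y^2*z + z^3, x*z, x^3), the image of x satisfies x^3 = 0 but x^2 ≠ 0; that is, the order of x equals 3. -/

import Mathlib

open MvPolynomial

noncomputable abbrev truncQ : Type := Polynomial (ZMod 2) ⧸ Ideal.span {(Polynomial.X : Polynomial (ZMod 2)) ^ 3}

noncomputable instance : CommRing truncQ := by unfold truncQ; infer_instance

noncomputable def phi7 : MvPolynomial (Fin 3) (ZMod 2) →+* truncQ :=
  (MvPolynomial.eval₂Hom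
    ((Ideal.Quotient.mk (Ideal.span {(Polynomial.X : Polynomial (ZMod 2)) ^ 3})).comp Polynomial.C)
    (![Ideal.Quotient.mk _ Polynomial.X, 0, 0]))

lemma phi7_bound (k : ℕ)
    (h : phi7 ((X 0 : MvPolynomial (Fin 3) (ZMod 2)) ^ k) = 0) : 3 ≤ k := by
  have hx : phi7 ((X 0 : MvPolynomial (Fin 3) (ZMod 2)) ^ k)
      = Ideal.Quotient.mk _ ((Polynomial.X : Polynomial (ZMod 2)) ^ k) := by
    simp [phi7]
  rw [hx, Ideal.Quotient.eq_zero_iff_mem, Ideal.mem_span_singleton] at h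
  by_contra hk
  push_neg at hk
  have h2 := Polynomial.natDegree_le_of_dvd h (by
    exact pow_ne_zero _ Polynomial.X_ne_zero)
  simp [Polynomial.natDegree_X_pow] at h2
  omega

/-- In `(Z/2)[x,y,z]/I` with `I = (x²y²+y²z², y⁴+y²z², y²z+z³, xz, x³)` (case B₁),
`x³ = 0` but `x² ≠ 0`: the order of `x` is 3. Here `x = X 0`, `y = X 1`, `z = X 2`. -/
theorem stmt_7 (I : Ideal (MvPolynomial (Fin 3) (ZMod 2)))
    (hI : I = Ideal.span {X 0 ^ 2 * X 1 ^ 2 + X 1 ^ 2 * X 2 ^ 2,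
      X 1 ^ 4 + X 1 ^ 2 * X 2 ^ 2, X 1 ^ 2 * X 2 + X 2 ^ 3, X 0 * X 2, X 0 ^ 3}) :
    (X 0 : MvPolynomial (Fin 3) (ZMod 2)) ^ 3 ∈ I ∧
    (X 0 : MvPolynomial (Fin 3) (ZMod 2)) ^ 2 ∉ I ∧
    IsLeast {k : ℕ | (X 0 : MvPolynomial (Fin 3) (ZMod 2)) ^ k ∈ I} 3 := by
  have hker : I ≤ RingHom.ker phi7 := by
    rw [hI, Ideal.span_le]
    intro p hp
    simp only [Set.mem_insert_iff, Set.mem_singleton_iff] at hp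
    have hmk3 : (Ideal.Quotient.mk (Ideal.span {(Polynomial.X : Polynomial (ZMod 2)) ^ 3})
        Polynomial.X) ^ 3 = 0 := by
      rw [← map_pow, Ideal.Quotient.eq_zero_iff_mem]
      exact Ideal.subset_span rfl
    rcases hp with h | h | h | h | h <;> subst h <;>
      simp [RingHom.mem_ker, phi7, hmk3]
  have key : ∀ k : ℕ, (X 0 : MvPolynomial (Fin 3) (ZMod 2)) ^ k ∈ I → 3 ≤ k := by
    intro k hk
    exact phi7_bound k (hker hk)
  have hmem : (X 0 : MvPolynomial (Fin 3) (ZMod 2)) ^ 3 ∈ I := by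
    rw [hI]
    exact Ideal.subset_span (by simp)
  refine ⟨hmem, fun h => by have := key 2 h; omega, hmem, fun k hk => key k hk⟩
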